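/- arXiv:0705.0412 — 2 statements merged into one kernel-verified Lean document; each statement's English description precedes it below -/
import Mathlib

section
/- Let w' be obtained from a nanoword w by the positive elementary move II⁻, i.e. w = xyz and w' = xAByBAz where A, B are two new letters with sgn(B) = −sgn(A). Then ⟨XXYY, w'⟩ = ⟨XXYY, w⟩, ⟨XYXY, w'⟩ = ⟨XYXY, w⟩, and ⟨XYYX, w'⟩ = ⟨XYYX, w⟩ − 1; moreover the number of letters increases by 2 and the total sign sum Σ_a sgn(a) is unchanged. -/
open Finset

/-- The canonical pattern of a word: each position is labelled by the index of the
first occurrence of its letter. Two words are isomorphic iff they have the same pattern. -/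
def patternOf {α : Type*} [DecidableEq α] (l : List α) : List ℕ :=
  l.map (fun a => l.idxOf a)

/-- The sub-word of `w` determined by a set `S` of letters: read, in order, exactly
those values of `w` lying in `S`. -/
def subword {α : Type*} [DecidableEq α] (w : List α) (S : Finset α) : List α :=
  w.filter (fun a => decide (a ∈ S))

/-- The pairing `⟨v, w⟩`: the sum, over all subsets `S` of the alphabet of `w` whose
induced sub-word is isomorphic to the pattern `v`, of `∏_{a ∈ S} sgn a`. -/
def pair {α : Type*} [DecidableEq α] (v : List ℕ) (w : List α) (sgn : α → ℤ) : ℤ :=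
  ∑ S ∈ w.toFinset.powerset,
    if patternOf (subword w S) = patternOf v then ∏ a ∈ S, sgn a else 0

lemma indexOf_map_injOn {α β : Type*} [DecidableEq α] [DecidableEq β]
    (f : α → β) (l : List α) (hf : ∀ a ∈ l, ∀ b ∈ l, f a = f b → a = b) :
    ∀ a ∈ l, (l.map f).idxOf (f a) = l.idxOf a := by
  induction l with
  | nil => intro a ha; simp at ha
  | cons c t ih =>
    intro a ha
    by_cases h : a = c
    · subst h; simp [List.idxOf_cons]
    · have ha' : a ∈ t := by
        rcases List.mem_cons.1 ha with h1 | h1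
        · exact absurd h1 h
        · exact h1
      have h1 : (c == a) = false := beq_eq_false_iff_ne.2 (fun he => h he.symm)
      have h2 : (f c == f a) = false := beq_eq_false_iff_ne.2
        (fun he => h (hf a ha c List.mem_cons_self he.symm))
      simp only [List.map_cons, List.idxOf_cons, h1, h2, cond_false]
      rw [ih (fun p hp q hq => hf p (List.mem_cons_of_mem _ hp) q
        (List.mem_cons_of_mem _ hq)) a ha']

lemma patternOf_map {α β : Type*} [DecidableEq α] [DecidableEq β]
    (f : α → β) (l : List α) (hf : ∀ a ∈ l, ∀ b ∈ l, f a = f b → a = b) :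
    patternOf (l.map f) = patternOf l := by
  unfold patternOf
  rw [List.map_map]
  exact List.map_congr_left (fun a ha => indexOf_map_injOn f l hf a ha)

lemma patternOf_length {α : Type*} [DecidableEq α] (l : List α) :
    (patternOf l).length = l.length := by simp [patternOf]

lemma subword_append {α : Type*} [DecidableEq α] (l₁ l₂ : List α) (S : Finset α) :
    subword (l₁ ++ l₂) S = subword l₁ S ++ subword l₂ S := by
  simp [subword, List.filter_append]

lemma subword_insert_of_not_mem {α : Type*} [DecidableEq α]
    (l : List α) (S : Finset α) (c : α) (hc : c ∉ l) :
    subword l (insert c S) = subword l S := by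
  unfold subword
  apply List.filter_congr
  intro a ha
  have hac : a ≠ c := fun h => hc (h ▸ ha)
  simp [Finset.mem_insert, hac]

lemma subword_nil_of_disjoint {α : Type*} [DecidableEq α]
    (l : List α) (S : Finset α) (h : ∀ a ∈ l, a ∉ S) :
    subword l S = [] := by
  unfold subword
  rw [List.filter_eq_nil_iff]
  intro a ha
  simpa using h a ha

lemma subword_pair_left {α : Type*} [DecidableEq α] (c d : α) (S : Finset α)
    (hcS : c ∈ S) (hdS : d ∉ S) : subword [c, d] S = [c] := by
  unfold subword
  rw [List.filter_cons, List.filter_cons, List.filter_nil]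
  simp [hcS, hdS]

lemma subword_pair_right {α : Type*} [DecidableEq α] (c d : α) (S : Finset α)
    (hcS : c ∉ S) (hdS : d ∈ S) : subword [c, d] S = [d] := by
  unfold subword
  rw [List.filter_cons, List.filter_cons, List.filter_nil]
  simp [hcS, hdS]

lemma subword_pair_both {α : Type*} [DecidableEq α] (c d : α) (S : Finset α)
    (hcS : c ∈ S) (hdS : d ∈ S) : subword [c, d] S = [c, d] := by
  unfold subword
  rw [List.filter_cons, List.filter_cons, List.filter_nil]
  simp [hcS, hdS]

/-- effect of the positive elementary move II⁻, `xyz ↦ xAByBAz` with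
`A, B` new letters of opposite signs: `⟨XXYY⟩` and `⟨XYXY⟩` are unchanged,
`⟨XYYX⟩` decreases by 1, the number of letters increases by 2, and the total sign
sum is unchanged. -/
theorem move_II_minus_effect {α : Type*} [DecidableEq α]
    (x y z : List α) (A B : α) (sgn : α → ℤ)
    (hGauss : ∀ c ∈ x ++ y ++ z, (x ++ y ++ z).count c = 2)
    (hsgn : ∀ c, sgn c = 1 ∨ sgn c = -1)
    (hA : A ∉ x ++ y ++ z) (hB : B ∉ x ++ y ++ z) (hAB : A ≠ B)
    (hopp : sgn B = -sgn A) :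
    pair [0,0,1,1] (x ++ [A, B] ++ y ++ [B, A] ++ z) sgn
        = pair [0,0,1,1] (x ++ y ++ z) sgn ∧
    pair [0,1,0,1] (x ++ [A, B] ++ y ++ [B, A] ++ z) sgn
        = pair [0,1,0,1] (x ++ y ++ z) sgn ∧
    pair [0,1,1,0] (x ++ [A, B] ++ y ++ [B, A] ++ z) sgn
        = pair [0,1,1,0] (x ++ y ++ z) sgn - 1 ∧
    (x ++ [A, B] ++ y ++ [B, A] ++ z).toFinset.card
        = (x ++ y ++ z).toFinset.card + 2 ∧
    ∑ c ∈ (x ++ [A, B] ++ y ++ [B, A] ++ z).toFinset, sgn c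
        = ∑ c ∈ (x ++ y ++ z).toFinset, sgn c := by
  have hAx : A ∉ x := fun h => hA (by simp [h])
  have hAy : A ∉ y := fun h => hA (by simp [h])
  have hAz : A ∉ z := fun h => hA (by simp [h])
  have hBx : B ∉ x := fun h => hB (by simp [h])
  have hBy : B ∉ y := fun h => hB (by simp [h])
  have hBz : B ∉ z := fun h => hB (by simp [h])
  set w := x ++ y ++ z with hw
  set w' := x ++ [A, B] ++ y ++ [B, A] ++ z with hw'
  have hAF : A ∉ w.toFinset := by simp [hw]; exact ⟨hAx, hAy, hAz⟩
  have hBF : B ∉ w.toFinset := by simp [hw]; exact ⟨hBx, hBy, hBz⟩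
  have hAF' : A ∉ insert B w.toFinset := by simp [hAB, hAF]
  have hw't : w'.toFinset = insert A (insert B w.toFinset) := by
    ext c; simp [hw, hw']; tauto
  -- the key pairing computation
  have key : ∀ v : List ℕ, v.length = 4 →
      pair v w' sgn = pair v w sgn +
        (if patternOf [A, B, B, A] = patternOf v then sgn A * sgn B else 0) := by
    intro v hv
    unfold pair
    rw [hw't, Finset.sum_powerset_insert hAF', Finset.sum_powerset_insert hBF,
      Finset.sum_powerset_insert hBF]
    have h1 : ∀ S ∈ w.toFinset.powerset,
        (if patternOf (subword w' S) = patternOf v then ∏ a ∈ S, sgn a else 0)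
          = (if patternOf (subword w S) = patternOf v then ∏ a ∈ S, sgn a else 0) := by
      intro S hS
      rw [Finset.mem_powerset] at hS
      have hAS : A ∉ S := fun h => hAF (hS h)
      have hBS : B ∉ S := fun h => hBF (hS h)
      have e1 : subword [A, B] S = [] :=
        subword_nil_of_disjoint _ _ (by intro a ha; simp at ha
                                        rcases ha with rfl | rfl; exacts [hAS, hBS])
      have e2 : subword [B, A] S = [] :=
        subword_nil_of_disjoint _ _ (by intro a ha; simp at ha
                                        rcases ha with rfl | rfl; exacts [hBS, hAS])
      have : subword w' S = subword w S := by
        simp only [hw, hw', subword_append, e1, e2, List.append_nil, List.nil_append]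
      rw [this]
    -- subword decompositions for sets containing A and/or B
    have hdecA : ∀ S : Finset α, S ⊆ w.toFinset →
        subword w' (insert A S)
          = subword x S ++ [A] ++ subword y S ++ [A] ++ subword z S := by
      intro S hS
      have hBS : B ∉ insert A S := by
        simp only [Finset.mem_insert, not_or]
        exact ⟨Ne.symm hAB, fun h => hBF (hS h)⟩
      simp only [hw', subword_append,
        subword_insert_of_not_mem x S A hAx,
        subword_insert_of_not_mem y S A hAy,
        subword_insert_of_not_mem z S A hAz,
        subword_pair_left A B _ (Finset.mem_insert_self A S) hBS,
        subword_pair_right B A _ hBS (Finset.mem_insert_self A S)]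
    have hdecB : ∀ S : Finset α, S ⊆ w.toFinset →
        subword w' (insert B S)
          = subword x S ++ [B] ++ subword y S ++ [B] ++ subword z S := by
      intro S hS
      have hAS : A ∉ insert B S := by
        simp only [Finset.mem_insert, not_or]
        exact ⟨hAB, fun h => hAF (hS h)⟩
      simp only [hw', subword_append,
        subword_insert_of_not_mem x S B hBx,
        subword_insert_of_not_mem y S B hBy,
        subword_insert_of_not_mem z S B hBz,
        subword_pair_right A B _ hAS (Finset.mem_insert_self B S),
        subword_pair_left B A _ (Finset.mem_insert_self B S) hAS]
    have hdecAB : ∀ S : Finset α, S ⊆ w.toFinset →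
        subword w' (insert A (insert B S))
          = subword x S ++ [A, B] ++ subword y S ++ [B, A] ++ subword z S := by
      intro S hS
      have hAmem : A ∈ insert A (insert B S) := Finset.mem_insert_self _ _
      have hBmem : B ∈ insert A (insert B S) :=
        Finset.mem_insert_of_mem (Finset.mem_insert_self _ _)
      have ex : subword x (insert A (insert B S)) = subword x S := by
        rw [subword_insert_of_not_mem x _ A hAx, subword_insert_of_not_mem x S B hBx]
      have ey : subword y (insert A (insert B S)) = subword y S := by
        rw [subword_insert_of_not_mem y _ A hAy, subword_insert_of_not_mem y S B hBy]
      have ez : subword z (insert A (insert B S)) = subword z S := by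
        rw [subword_insert_of_not_mem z _ A hAz, subword_insert_of_not_mem z S B hBz]
      simp only [hw', subword_append, ex, ey, ez,
        subword_pair_both A B _ hAmem hBmem, subword_pair_both B A _ hBmem hAmem]
    -- middle terms cancel
    have h2 : ∀ S ∈ w.toFinset.powerset,
        (if patternOf (subword w' (insert B S)) = patternOf v
            then ∏ a ∈ insert B S, sgn a else 0)
        + (if patternOf (subword w' (insert A S)) = patternOf v
            then ∏ a ∈ insert A S, sgn a else 0) = 0 := by
      intro S hS
      rw [Finset.mem_powerset] at hS
      have hAS : A ∉ S := fun h => hAF (hS h)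
      have hBS : B ∉ S := fun h => hBF (hS h)
      have hmemx : ∀ c ∈ subword x S, c ∈ x := fun c hc => List.mem_of_mem_filter hc
      have hmemy : ∀ c ∈ subword y S, c ∈ y := fun c hc => List.mem_of_mem_filter hc
      have hmemz : ∀ c ∈ subword z S, c ∈ z := fun c hc => List.mem_of_mem_filter hc
      set LB := subword x S ++ [B] ++ subword y S ++ [B] ++ subword z S with hLB
      set LA := subword x S ++ [A] ++ subword y S ++ [A] ++ subword z S with hLA
      have hmemLB : ∀ c ∈ LB, c = B ∨ (c ≠ A ∧ c ≠ B) := by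
        intro c hc
        simp only [hLB, List.mem_append, List.mem_singleton] at hc
        rcases hc with (((hc | hc) | hc) | hc) | hc
        · exact Or.inr ⟨fun h => hAx (h ▸ hmemx c hc), fun h => hBx (h ▸ hmemx c hc)⟩
        · exact Or.inl hc
        · exact Or.inr ⟨fun h => hAy (h ▸ hmemy c hc), fun h => hBy (h ▸ hmemy c hc)⟩
        · exact Or.inl hc
        · exact Or.inr ⟨fun h => hAz (h ▸ hmemz c hc), fun h => hBz (h ▸ hmemz c hc)⟩
      have hpat : patternOf LA = patternOf LB := by
        have m : ∀ (l : List α), B ∉ l →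
            l.map (fun c => if c = B then A else c) = l := by
          intro l hl
          have hcong : ∀ c ∈ l, (fun c => if c = B then A else c) c = id c := by
            intro c hc
            have hne : c ≠ B := fun h => hl (h ▸ hc)
            simp [hne]
          rw [List.map_congr_left hcong, List.map_id]
        have hBxS : B ∉ subword x S := fun h => hBx (hmemx _ h)
        have hByS : B ∉ subword y S := fun h => hBy (hmemy _ h)
        have hBzS : B ∉ subword z S := fun h => hBz (hmemz _ h)
        have hmap : LB.map (fun c => if c = B then A else c) = LA := by
          simp only [hLB, hLA, List.map_append, m _ hBxS, m _ hByS, m _ hBzS,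
            List.map_cons, List.map_nil]
          simp
        rw [← hmap]
        apply patternOf_map
        intro a ha b hb hfab
        rcases hmemLB a ha with ha' | ha' <;> rcases hmemLB b hb with hb' | hb'
        · rw [ha', hb']
        · subst ha'; simp [hb'.2] at hfab; exact absurd hfab.symm hb'.1
        · subst hb'; simp [ha'.2] at hfab; exact absurd hfab ha'.1
        · simpa [ha'.2, hb'.2] using hfab
      rw [hdecA S hS, hdecB S hS, ← hLA, ← hLB, hpat,
        Finset.prod_insert hAS, Finset.prod_insert hBS]
      split_ifs with h
      · rw [hopp]; ring
      · ring
    -- terms containing both A and B vanish except for S = ∅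
    have h3 : ∀ S ∈ w.toFinset.powerset, S ≠ (∅ : Finset α) →
        (if patternOf (subword w' (insert A (insert B S))) = patternOf v
            then ∏ a ∈ insert A (insert B S), sgn a else 0) = 0 := by
      intro S hS hSne
      rw [Finset.mem_powerset] at hS
      apply if_neg
      intro hcontra
      have hlen := congrArg List.length hcontra
      rw [patternOf_length, patternOf_length, hv, hdecAB S hS] at hlen
      simp only [List.length_append, List.length_cons, List.length_nil] at hlen
      obtain ⟨c, hc⟩ := Finset.nonempty_iff_ne_empty.2 hSne
      have hcw : c ∈ w := by simpa [List.mem_toFinset] using hS hc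
      have : c ∈ subword x S ∨ c ∈ subword y S ∨ c ∈ subword z S := by
        simp only [hw, List.mem_append] at hcw
        unfold subword
        rcases hcw with (h | h) | h
        · exact Or.inl (List.mem_filter.2 ⟨h, by simp [hc]⟩)
        · exact Or.inr (Or.inl (List.mem_filter.2 ⟨h, by simp [hc]⟩))
        · exact Or.inr (Or.inr (List.mem_filter.2 ⟨h, by simp [hc]⟩))
      rcases this with h | h | h
      · have := List.length_pos_of_mem h; omega
      · have := List.length_pos_of_mem h; omega
      · have := List.length_pos_of_mem h; omega
    -- assemble the four sums
    rw [Finset.sum_congr rfl h1]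
    rw [Finset.sum_eq_single_of_mem (∅ : Finset α)
      (Finset.empty_mem_powerset _) h3]
    have h4 : ∑ S ∈ w.toFinset.powerset,
        (if patternOf (subword w' (insert B S)) = patternOf v
            then ∏ a ∈ insert B S, sgn a else 0)
        + ∑ S ∈ w.toFinset.powerset,
        (if patternOf (subword w' (insert A S)) = patternOf v
            then ∏ a ∈ insert A S, sgn a else 0) = 0 := by
      rw [← Finset.sum_add_distrib]
      exact Finset.sum_eq_zero h2
    have h5 : subword w' (insert A (insert B (∅ : Finset α))) = [A, B, B, A] := by
      rw [hdecAB ∅ (Finset.empty_subset _)]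
      have ex : subword x (∅ : Finset α) = [] :=
        subword_nil_of_disjoint _ _ (by simp)
      have ey : subword y (∅ : Finset α) = [] :=
        subword_nil_of_disjoint _ _ (by simp)
      have ez : subword z (∅ : Finset α) = [] :=
        subword_nil_of_disjoint _ _ (by simp)
      simp [ex, ey, ez]
    have h6 : ∏ a ∈ insert A (insert B (∅ : Finset α)), sgn a = sgn A * sgn B := by
      rw [Finset.prod_insert (by simp [hAB]), Finset.prod_insert (Finset.notMem_empty B),
        Finset.prod_empty, mul_one]
    rw [h5, h6]
    linarith [h4]
  -- pattern computations
  have eA0 : List.idxOf A [A, B, B, A] = 0 := by simp [List.idxOf_cons]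
  have eB1 : List.idxOf B [A, B, B, A] = 1 := by
    simp [List.idxOf_cons, beq_eq_false_iff_ne, Ne.symm hAB, hAB]
  have hABBA : patternOf [A, B, B, A] = [0, 1, 1, 0] := by
    simp only [patternOf, List.map_cons, List.map_nil, eA0, eB1]
  have hsgnAB : sgn A * sgn B = -1 := by
    rcases hsgn A with h | h <;> rw [hopp, h] <;> norm_num
  refine ⟨?_, ?_, ?_, ?_, ?_⟩
  · rw [key [0,0,1,1] rfl, hABBA, if_neg (by decide), add_zero]
  · rw [key [0,1,0,1] rfl, hABBA, if_neg (by decide), add_zero]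
  · rw [key [0,1,1,0] rfl, hABBA, if_pos (by decide), hsgnAB]; ring
  · rw [hw't, Finset.card_insert_of_notMem hAF', Finset.card_insert_of_notMem hBF]
  · rw [hw't, Finset.sum_insert hAF', Finset.sum_insert hBF, hopp]; ring
end

section
/- Let v be a Gauss word of length 2n whose letters carry dimensions d ∈ {1, 2}, and for 0 ≤ k < 2n let rotᵏ v denote the cyclic rotation of v by k positions (dimensions rotating with the letters). Set ε₀ = 1 and ε_{k+1} = −ε_k if the occurrence v(k) rotated at step k+1 belongs to a 1-dimensional letter, ε_{k+1} = ε_k if it belongs to a 2-dimensional letter. Then for every nanoword w, the sum Σ_{k=0}^{2n−1} ε_k ⟨rotᵏ v, w⟩ is unchanged when w is replaced by its image under the base point move. (This is the invariance of pairings with marked cyclic equivalence classes, underlying the invariant GCI₃ of plane closed curves.) -/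
open Finset

/-- The generalized pairing for dimensioned patterns: `v` is a list of
(letter id, dimension) pairs, and each letter `a` of a matching subset contributes
`sgn a ^ d`, where `d` is the dimension of the pattern letter matched to `a`. -/
def gpair {α : Type*} [DecidableEq α] (v : List (ℕ × ℕ)) (w : List α) (sgn : α → ℤ) : ℤ :=
  ∑ S ∈ w.toFinset.powerset,
    if patternOf (subword w S) = patternOf (v.map Prod.fst) then
      ∏ i : Fin (subword w S).length,
        if (subword w S).idxOf ((subword w S).get i) = (i : ℕ) then
          sgn ((subword w S).get i) ^ ((v.map Prod.snd).getD (i : ℕ) 1)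
        else 1
    else 0


theorem my_indexOf_eq {α : Type*} [DecidableEq α] {l : List α} {x : α} {j : ℕ}
    (h : j < l.length) (h1 : l[j] = x) (h2 : ∀ r (hr : r < j), l[r]'(lt_trans hr h) ≠ x) :
    l.idxOf x = j := by
  show List.findIdx (· == x) l = j
  rw [List.findIdx_eq h]
  refine ⟨by simp [h1], fun r hr => by simp [h2 r hr]⟩

theorem patternOf_getElem {α : Type*} [DecidableEq α] (l : List α) (i : ℕ) (h : i < l.length) :
    (patternOf l)[i]'(by simpa [patternOf] using h) = l.idxOf (l[i]) := by
  simp [patternOf]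

def posRel {α : Type*} (l : List α) (i j : ℕ) : Prop :=
  ∃ (hi : i < l.length) (hj : j < l.length), l[i] = l[j]

theorem indexOf_eq_indexOf_iff {α : Type*} [DecidableEq α] {l : List α} {i j : ℕ}
    (hi : i < l.length) (hj : j < l.length) :
    l.idxOf l[i] = l.idxOf l[j] ↔ l[i] = l[j] := by
  constructor
  · intro h
    have h1 : l[l.idxOf l[i]]'(List.idxOf_lt_length_iff.2 (l.getElem_mem hi)) = l[i] :=
      List.getElem_idxOf _
    have h2 : l[l.idxOf l[j]]'(List.idxOf_lt_length_iff.2 (l.getElem_mem hj)) = l[j] :=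
      List.getElem_idxOf _
    rw [← h1, ← h2]
    congr 1
  · intro h; rw [h]

theorem indexOf_spec {α : Type*} [DecidableEq α] {l : List α} {x : α} (hx : x ∈ l) :
    l[l.idxOf x]'(List.idxOf_lt_length_iff.2 hx) = x ∧
      ∀ r (hr : r < l.idxOf x), l[r]'(lt_trans hr (List.idxOf_lt_length_iff.2 hx)) ≠ x := by
  have hlt : l.idxOf x < l.length := List.idxOf_lt_length_iff.2 hx
  have : List.findIdx (· == x) l = l.idxOf x := rfl
  have hh := (List.findIdx_eq hlt).mp this
  refine ⟨by simpa using hh.1, fun r hr => by simpa using hh.2 r hr⟩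

theorem patternOf_eq_iff {α β : Type*} [DecidableEq α] [DecidableEq β]
    {l : List α} {m : List β} :
    patternOf l = patternOf m ↔
      l.length = m.length ∧ ∀ i j, posRel l i j ↔ posRel m i j := by
  have plen : (patternOf l).length = l.length := by simp [patternOf]
  have plen' : (patternOf m).length = m.length := by simp [patternOf]
  constructor
  · intro h
    have hlen : l.length = m.length := by rw [← plen, ← plen', h]
    have key : ∀ i (hi : i < l.length),
        l.idxOf l[i] = m.idxOf (m[i]'(hlen ▸ hi)) := by
      intro i hi
      rw [← patternOf_getElem l i hi, ← patternOf_getElem m i (hlen ▸ hi)]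
      exact List.getElem_of_eq h _
    refine ⟨hlen, fun i j => ?_⟩
    constructor
    · rintro ⟨hi, hj, hij⟩
      have hi' : i < m.length := hlen ▸ hi
      have hj' : j < m.length := hlen ▸ hj
      exact ⟨hi', hj', (indexOf_eq_indexOf_iff hi' hj').mp
        (by rw [← key i hi, ← key j hj]; exact (indexOf_eq_indexOf_iff hi hj).mpr hij)⟩
    · rintro ⟨hi, hj, hij⟩
      have hi' : i < l.length := hlen ▸ hi
      have hj' : j < l.length := hlen ▸ hj
      exact ⟨hi', hj', (indexOf_eq_indexOf_iff hi' hj').mp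
        (by rw [key i hi', key j hj']; exact (indexOf_eq_indexOf_iff hi hj).mpr hij)⟩
  · rintro ⟨hlen, hrel⟩
    apply List.ext_getElem (by rw [plen, plen', hlen])
    intro i hi hi'
    rw [plen] at hi
    rw [patternOf_getElem l i hi, patternOf_getElem m i (hlen ▸ hi)]
    have hmem : l[i] ∈ l := l.getElem_mem hi
    obtain ⟨hget, hmin⟩ := indexOf_spec hmem
    have hqlt : l.idxOf l[i] < l.length := List.idxOf_lt_length_iff.2 hmem
    have h1 : posRel l (l.idxOf l[i]) i := ⟨hqlt, hi, hget⟩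
    obtain ⟨hq', hi'', hget'⟩ := (hrel _ _).mp h1
    refine (my_indexOf_eq (hlen ▸ hqlt) hget' fun r hr hr' => ?_).symm
    exact hmin r hr (((hrel r i).mpr ⟨lt_trans hr hq', hi'', hr'⟩).2.2)

theorem posRel_rotate {α : Type*} (l : List α) (s i j : ℕ) :
    posRel (l.rotate s) i j ↔
      (i < l.length ∧ j < l.length ∧ posRel l ((i + s) % l.length) ((j + s) % l.length)) := by
  constructor
  · rintro ⟨hi, hj, hij⟩
    rw [List.length_rotate] at hi hj
    have h0 : 0 < l.length := Nat.pos_of_ne_zero (by omega)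
    refine ⟨hi, hj, Nat.mod_lt _ h0, Nat.mod_lt _ h0, ?_⟩
    rwa [List.getElem_rotate, List.getElem_rotate] at hij
  · rintro ⟨hi, hj, _, _, hij⟩
    refine ⟨by rwa [List.length_rotate], by rwa [List.length_rotate], ?_⟩
    rwa [List.getElem_rotate, List.getElem_rotate]

theorem patternOf_rotate_of_eq {α β : Type*} [DecidableEq α] [DecidableEq β]
    {l : List α} {m : List β} (h : patternOf l = patternOf m) (s : ℕ) :
    patternOf (l.rotate s) = patternOf (m.rotate s) := by
  rw [patternOf_eq_iff] at h ⊢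
  obtain ⟨hlen, hrel⟩ := h
  refine ⟨by simp [hlen], fun i j => ?_⟩
  rw [posRel_rotate, posRel_rotate, hlen, hrel]

theorem patternOf_rotate_one_iff {α β : Type*} [DecidableEq α] [DecidableEq β]
    {l : List α} {m : List β} :
    patternOf (l.rotate 1) = patternOf (m.rotate 1) ↔ patternOf l = patternOf m := by
  constructor
  · intro h
    have hlen : l.length = m.length := by
      have := (patternOf_eq_iff.mp h).1
      simpa using this
    rcases Nat.eq_zero_or_pos l.length with h0 | h0
    · rw [List.length_eq_zero_iff.mp h0, List.length_eq_zero_iff.mp (hlen ▸ h0 : m.length = 0)]; simp [patternOf]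
    · have := patternOf_rotate_of_eq h (l.length - 1)
      rwa [List.rotate_rotate, List.rotate_rotate, Nat.add_sub_cancel' h0,
        List.rotate_length, hlen, List.rotate_length] at this
  · exact fun h => patternOf_rotate_of_eq h 1

theorem prod_firstOcc {α : Type*} [DecidableEq α] (l : List α) (F : α → ℕ → ℤ) :
    (∏ i : Fin l.length, if l.idxOf (l.get i) = (i : ℕ) then F (l.get i) (i : ℕ) else 1)
      = ∏ c ∈ l.toFinset, F c (l.idxOf c) := by
  classical
  rw [← Finset.prod_filter]
  refine Finset.prod_bij (fun i _ => l.get i) ?_ ?_ ?_ ?_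
  · intro i hi
    exact List.mem_toFinset.mpr (l.get_mem ..)
  · intro i hi j hj hij
    simp only [Finset.mem_filter, Finset.mem_univ, true_and] at hi hj
    apply Fin.ext
    rw [← hi, ← hj]; exact congrArg l.idxOf hij
  · intro c hc
    have hcl : c ∈ l := List.mem_toFinset.mp hc
    have hlt : l.idxOf c < l.length := List.idxOf_lt_length_iff.2 hcl
    refine ⟨⟨l.idxOf c, hlt⟩, ?_, ?_⟩
    · simp only [Finset.mem_filter, Finset.mem_univ, true_and, List.get_eq_getElem]
      rw [List.getElem_idxOf]
    · simp only [List.get_eq_getElem]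
      rw [List.getElem_idxOf]
  · intro i hi
    simp only [Finset.mem_filter, Finset.mem_univ, true_and] at hi
    rw [hi]

theorem even_countP_dim_one {v : List (ℕ × ℕ)}
    (hvGauss : ∀ c ∈ v.map Prod.fst, (v.map Prod.fst).count c = 2)
    (hdimconst : ∀ p ∈ v, ∀ q ∈ v, p.1 = q.1 → p.2 = q.2) :
    Even (v.countP (fun p => decide (p.2 = 1))) := by
  classical
  set Q : ℕ × ℕ → Bool := fun p => decide (p.2 = 1) with hQ
  set L : List ℕ := (v.filter Q).map Prod.fst with hL
  have h1 : v.countP Q = L.length := by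
    rw [hL, List.length_map, List.countP_eq_length_filter]
  have h2 : L.length = ∑ c ∈ L.toFinset, L.count c := by
    have := Multiset.toFinset_sum_count_eq (↑L : Multiset ℕ)
    simpa using this.symm
  have h3 : ∀ c ∈ L.toFinset, L.count c = 2 := by
    intro c hc
    obtain ⟨p, hpf, hpc⟩ := List.mem_map.mp (List.mem_toFinset.mp hc)
    have hpv : p ∈ v := List.mem_of_mem_filter hpf
    have hpQ : Q p = true := List.of_mem_filter hpf
    have key : L.count c = v.countP (fun q => q.1 == c) := by
      rw [hL, List.count_eq_countP, List.countP_map, List.countP_filter]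
      apply List.countP_congr
      intro q hq
      simp only [Function.comp_apply, Bool.and_eq_true, beq_iff_eq, decide_eq_true_eq, hQ]
      constructor
      · rintro ⟨h, _⟩; exact h
      · intro h
        refine ⟨h, ?_⟩
        have := hdimconst q hq p hpv (by rw [h, hpc])
        rw [this]
        simpa [hQ] using hpQ
    rw [key]
    have hc' : c ∈ v.map Prod.fst := List.mem_map.mpr ⟨p, hpv, hpc⟩
    have := hvGauss c hc'
    rw [List.count_eq_countP, List.countP_map] at this
    convert this using 2
    rfl
  rw [h1, h2, Finset.sum_congr rfl h3, Finset.sum_const, smul_eq_mul]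
  exact ⟨L.toFinset.card, by ring⟩

def term {α : Type*} [DecidableEq α] (v : List (ℕ × ℕ)) (w : List α) (sgn : α → ℤ)
    (S : Finset α) : ℤ :=
  if patternOf (subword w S) = patternOf (v.map Prod.fst) then
    ∏ c ∈ (subword w S).toFinset,
      sgn c ^ ((v.map Prod.snd).getD ((subword w S).idxOf c) 1)
  else 0

theorem gpair_eq {α : Type*} [DecidableEq α] (v : List (ℕ × ℕ)) (w : List α) (sgn : α → ℤ) :
    gpair v w sgn = ∑ S ∈ w.toFinset.powerset, term v w sgn S := by
  unfold gpair term
  refine Finset.sum_congr rfl fun S _ => ?_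
  split
  · exact prod_firstOcc (subword w S) (fun c i => sgn c ^ ((v.map Prod.snd).getD i 1))
  · rfl

theorem term_out {α : Type*} [DecidableEq α] (v : List (ℕ × ℕ)) (a : α) (x : List α)
    (sgn : α → ℤ) (S : Finset α) (haS : a ∉ S) :
    term v (a :: x) sgn S = term v (x ++ [a]) (Function.update sgn a (-(sgn a))) S := by
  have h1 : subword (a :: x) S = subword x S := by
    simp [subword, List.filter_cons, haS]
  have h2 : subword (x ++ [a]) S = subword x S := by
    simp [subword, List.filter_append, haS]
  unfold term
  rw [h1, h2]
  split
  · refine Finset.prod_congr rfl fun c hc => ?_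
    have hcS : c ∈ S := by
      have := List.of_mem_filter (List.mem_toFinset.mp hc)
      simpa using this
    rw [Function.update_of_ne (fun h : c = a => haS (h ▸ hcS))]
  · rfl

theorem term_in_shift {α : Type*} [DecidableEq α]
    (n : ℕ) (v : List (ℕ × ℕ)) (hvlen : v.length = 2 * n)
    (hvGauss : ∀ c ∈ v.map Prod.fst, (v.map Prod.fst).count c = 2)
    (hdim : ∀ p ∈ v, p.2 = 1 ∨ p.2 = 2)
    (hdimconst : ∀ p ∈ v, ∀ q ∈ v, p.1 = q.1 → p.2 = q.2)
    (a : α) (x : List α) (sgn : α → ℤ)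
    (hGauss : ∀ c ∈ a :: x, (a :: x).count c = 2)
    (k : ℕ) (hk : k < 2 * n) (S : Finset α) (haS : a ∈ S) :
    (-1:ℤ)^((v.take k).countP (fun p => decide (p.2 = 1))) * term (v.rotate k) (a::x) sgn S
      = (-1:ℤ)^((v.take ((k+1) % (2*n))).countP (fun p => decide (p.2 = 1))) *
          term (v.rotate ((k+1) % (2*n))) (x ++ [a]) (Function.update sgn a (-(sgn a))) S := by
  classical
  have hN : 0 < 2 * n := Nat.pos_of_ne_zero (by omega)
  set t := subword x S with ht
  have hsub1 : subword (a::x) S = a :: t := by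
    simp [subword, List.filter_cons, haS, ht]
  have hsub2 : subword (x ++ [a]) S = t ++ [a] := by
    simp [subword, List.filter_append, haS, ht]
  have hrotv : v.rotate ((k+1) % (2*n)) = (v.rotate k).rotate 1 := by
    rw [List.rotate_rotate, ← hvlen, List.rotate_mod]
  have hP : (v.rotate ((k+1) % (2*n))).map Prod.fst
      = ((v.rotate k).map Prod.fst).rotate 1 := by
    rw [hrotv, List.map_rotate]
  have hl' : t ++ [a] = (a :: t).rotate 1 := by
    rw [List.rotate_cons_succ, List.rotate_zero]
  have hcond : (patternOf (t ++ [a]) = patternOf ((v.rotate ((k+1) % (2*n))).map Prod.fst))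
      ↔ (patternOf (a :: t) = patternOf ((v.rotate k).map Prod.fst)) := by
    rw [hP, hl']
    exact patternOf_rotate_one_iff
  unfold term
  rw [hsub1, hsub2]
  by_cases hmatch : patternOf (a :: t) = patternOf ((v.rotate k).map Prod.fst)
  swap
  · rw [if_neg hmatch, if_neg (fun h => hmatch (hcond.mp h))]; ring
  rw [if_pos hmatch, if_pos (hcond.mpr hmatch)]
  -- abbreviations
  set D : List ℕ := (v.rotate k).map Prod.snd with hDdef
  set D' : List ℕ := (v.rotate ((k+1) % (2*n))).map Prod.snd with hD'def
  have hD' : D' = D.rotate 1 := by rw [hD'def, hrotv, List.map_rotate, hDdef]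
  have hDlen : D.length = 2 * n := by simp [hDdef, hvlen]
  have hlen : (a :: t).length = 2 * n := by
    have := (patternOf_eq_iff.mp hmatch).1
    simpa [hvlen] using this
  have htlen : t.length + 1 = 2 * n := by simpa using hlen
  -- a occurs in t
  have hax : (a :: x).count a = 2 := hGauss a List.mem_cons_self
  have hcx : x.count a = 1 := by
    rw [List.count_cons_self] at hax; omega
  have hat : a ∈ t := by
    have hta : t.count a = x.count a := List.count_filter (by simpa using haS)
    rw [← List.count_pos_iff]
    omega
  set j₀ := t.idxOf a with hj₀def
  have hj₀ : j₀ < t.length := List.idxOf_lt_length_iff.2 hat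
  -- getD computations
  have hDget : ∀ (i : ℕ) (h : i < 2 * n),
      D.getD i 1 = ((v.rotate k)[i]'(by simpa [hvlen] using h)).2 := by
    intro i h
    rw [List.getD_eq_getElem _ _ (by rw [hDlen]; exact h)]
    exact List.getElem_map _
  have hD'get : ∀ (i : ℕ) (h : i < 2 * n), D'.getD i 1 = D.getD ((i+1) % (2*n)) 1 := by
    intro i h
    have h1 : i < (D.rotate 1).length := by rw [List.length_rotate, hDlen]; exact h
    calc D'.getD i 1 = (D.rotate 1).getD i 1 := by rw [hD']
      _ = (D.rotate 1)[i]'h1 := List.getD_eq_getElem _ _ h1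
      _ = D[(i+1) % D.length]'(Nat.mod_lt _ (by rw [hDlen]; exact hN)) :=
          List.getElem_rotate D 1 i h1
      _ = D.getD ((i+1) % D.length) 1 := (List.getD_eq_getElem _ _
            (Nat.mod_lt _ (by rw [hDlen]; exact hN))).symm
      _ = D.getD ((i+1) % (2*n)) 1 := by rw [hDlen]
  -- the dimension d at position k of v
  have hvk : k < v.length := by omega
  have hd0 : D.getD 0 1 = (v[k]'hvk).2 := by
    rw [hDget 0 hN]
    congr 1
    rw [List.getElem_rotate]
    congr 1
    rw [hvlen]
    simpa using Nat.mod_eq_of_lt hk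
  have hd12 : (v[k]'hvk).2 = 1 ∨ (v[k]'hvk).2 = 2 := hdim _ (v.getElem_mem hvk)
  -- same dimension at the other occurrence of a
  have hdj : D.getD (j₀ + 1) 1 = D.getD 0 1 := by
    have hlt : j₀ + 1 < 2 * n := by omega
    have hpos : posRel (a :: t) 0 (j₀ + 1) := by
      refine ⟨by simp, by simpa [hlen] using hlt, ?_⟩
      rw [List.getElem_cons_succ]
      simp [hj₀def, List.getElem_idxOf]
    obtain ⟨h0', hj', hPeq⟩ := ((patternOf_eq_iff.mp hmatch).2 0 (j₀+1)).mp hpos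
    have hfst : ((v.rotate k)[0]'(by simpa [hvlen] using hN)).1
        = ((v.rotate k)[j₀+1]'(by simpa [hvlen] using hlt)).1 := by
      have e0 : ((v.rotate k).map Prod.fst)[0]'(by simpa using h0')
          = ((v.rotate k)[0]'(by simpa [hvlen] using hN)).1 := List.getElem_map _
      have e1 : ((v.rotate k).map Prod.fst)[j₀+1]'(by simpa using hj')
          = ((v.rotate k)[j₀+1]'(by simpa [hvlen] using hlt)).1 := List.getElem_map _
      rw [← e0, ← e1]; exact hPeq
    have hm0 : (v.rotate k)[0]'(by simpa [hvlen] using hN) ∈ v :=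
      List.mem_rotate.mp ((v.rotate k).getElem_mem _)
    have hmj : (v.rotate k)[j₀+1]'(by simpa [hvlen] using hlt) ∈ v :=
      List.mem_rotate.mp ((v.rotate k).getElem_mem _)
    rw [hDget _ hlt, hDget 0 hN]
    exact (hdimconst _ hmj _ hm0 hfst.symm)
  -- epsilon relation
  have heps : (-1:ℤ)^((v.take ((k+1) % (2*n))).countP (fun p => decide (p.2 = 1)))
      = (-1:ℤ)^((v.take k).countP (fun p => decide (p.2 = 1)))
        * (-1)^(if (v[k]'hvk).2 = 1 then 1 else 0) := by
    have htk : v.take (k+1) = v.take k ++ [v[k]'hvk] := by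
      rw [List.take_succ, List.getElem?_eq_getElem hvk]
      rfl
    have hsing : ([v[k]'hvk] : List (ℕ × ℕ)).countP (fun p => decide (p.2 = 1))
        = (if (v[k]'hvk).2 = 1 then 1 else 0) := by
      by_cases h : (v[k]'hvk).2 = 1 <;> simp [List.countP_cons, h]
    have hcsplit : (v.take (k+1)).countP (fun p => decide (p.2 = 1))
        = (v.take k).countP (fun p => decide (p.2 = 1))
          + (if (v[k]'hvk).2 = 1 then 1 else 0) := by
      rw [htk, List.countP_append, hsing]
    rcases Nat.lt_or_ge (k+1) (2*n) with hlt | hge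
    · rw [Nat.mod_eq_of_lt hlt, hcsplit, pow_add]
    · have hk1 : k + 1 = 2 * n := by omega
      have hvfull' : v.take (k+1) = v := by rw [hk1, ← hvlen]; exact List.take_length
      have heven : Even (v.countP (fun p => decide (p.2 = 1))) :=
        even_countP_dim_one hvGauss hdimconst
      have hc2 : (v.take k).countP (fun p => decide (p.2 = 1))
          + (if (v[k]'hvk).2 = 1 then 1 else 0)
          = v.countP (fun p => decide (p.2 = 1)) := by rw [← hcsplit, hvfull']
      rw [hk1, Nat.mod_self]
      simp only [List.take_zero, List.countP_nil, pow_zero]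
      rw [← pow_add, hc2]
      exact (Even.neg_one_pow heven).symm
  rw [heps]
  -- split off the letter a from both products
  have hTF : (t ++ [a]).toFinset = (a :: t).toFinset := by
    ext c; simp [or_comm]
  rw [hTF]
  have haT : a ∈ (a :: t).toFinset := by simp
  rw [← Finset.mul_prod_erase _ _ haT, ← Finset.mul_prod_erase _ _ haT]
  have hErase : ∀ c ∈ (a :: t).toFinset.erase a,
      Function.update sgn a (-(sgn a)) c ^ (D'.getD ((t ++ [a]).idxOf c) 1)
        = sgn c ^ (D.getD ((a :: t).idxOf c) 1) := by
    intro c hc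
    obtain ⟨hca, hcmem⟩ := Finset.mem_erase.mp hc
    have hct : c ∈ t := by
      rcases List.mem_cons.mp (List.mem_toFinset.mp hcmem) with h | h
      · exact absurd h hca
      · exact h
    have hic : t.idxOf c < t.length := List.idxOf_lt_length_iff.2 hct
    rw [Function.update_of_ne hca]
    congr 1
    rw [List.idxOf_append_of_mem hct, List.idxOf_cons_ne _ (fun h => hca h.symm)]
    rw [hD'get _ (by omega), Nat.mod_eq_of_lt (by omega)]
  rw [Finset.prod_congr rfl hErase]
  -- the factor at a
  have hfa : (a :: t).idxOf a = 0 := List.idxOf_cons_self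
  have hfa' : (t ++ [a]).idxOf a = j₀ := by
    rw [List.idxOf_append_of_mem hat]
  rw [hfa, hfa', Function.update_self, hD'get _ (by omega), Nat.mod_eq_of_lt (by omega),
    hdj, hd0]
  rcases hd12 with h1 | h1 <;> rw [h1] <;> norm_num <;> ring

theorem sum_shift_mod {M : Type*} [AddCommMonoid M] (N : ℕ) (f : ℕ → M) :
    ∑ k ∈ Finset.range N, f ((k + 1) % N) = ∑ k ∈ Finset.range N, f k := by
  rcases Nat.eq_zero_or_pos N with h | h
  · simp [h]
  refine Finset.sum_nbij' (fun k => (k + 1) % N) (fun k => (k + (N - 1)) % N)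
    (fun k hk => Finset.mem_range.mpr (Nat.mod_lt _ h))
    (fun k hk => Finset.mem_range.mpr (Nat.mod_lt _ h)) ?_ ?_ (fun k hk => rfl)
  · intro k hk
    rw [Finset.mem_range] at hk
    show ((k + 1) % N + (N - 1)) % N = k
    have e : k + 1 + (N - 1) = k + N := by omega
    rw [Nat.mod_add_mod, e, Nat.add_mod_right, Nat.mod_eq_of_lt hk]
  · intro k hk
    rw [Finset.mem_range] at hk
    show ((k + (N - 1)) % N + 1) % N = k
    have e : k + (N - 1) + 1 = k + N := by omega
    rw [Nat.mod_add_mod, e, Nat.add_mod_right, Nat.mod_eq_of_lt hk]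

/-- for a dimensioned Gauss word `v` of length `2n` (letters given
with dimensions in `{1, 2}`, both occurrences of a letter carrying the same
dimension), with signs `ε_k = (−1)^(number of 1-dimensional occurrences among the
first k positions)`, the sum `Σ_{k<2n} ε_k ⟨rotᵏ v, w⟩` is unchanged when the
nanoword `w` is replaced by its image under the base point move. -/
theorem marked_cyclic_sum_base_point_invariant {α : Type*} [DecidableEq α]
    (n : ℕ) (v : List (ℕ × ℕ)) (hvlen : v.length = 2 * n)
    (hvGauss : ∀ c ∈ v.map Prod.fst, (v.map Prod.fst).count c = 2)
    (hdim : ∀ p ∈ v, p.2 = 1 ∨ p.2 = 2)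
    (hdimconst : ∀ p ∈ v, ∀ q ∈ v, p.1 = q.1 → p.2 = q.2)
    (a : α) (x : List α) (sgn : α → ℤ)
    (hGauss : ∀ c ∈ a :: x, (a :: x).count c = 2)
    (hsgn : ∀ c, sgn c = 1 ∨ sgn c = -1) :
    ∑ k ∈ Finset.range (2 * n),
        (-1 : ℤ) ^ ((v.take k).countP (fun p => decide (p.2 = 1))) *
          gpair (v.rotate k) (a :: x) sgn =
      ∑ k ∈ Finset.range (2 * n),
        (-1 : ℤ) ^ ((v.take k).countP (fun p => decide (p.2 = 1))) *
          gpair (v.rotate k) (x ++ [a]) (Function.update sgn a (-(sgn a))) := by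
  classical
  have hT : (x ++ [a]).toFinset = (a :: x).toFinset := by
    ext c; simp [or_comm]
  set ε : ℕ → ℤ := fun k => (-1 : ℤ) ^ ((v.take k).countP (fun p => decide (p.2 = 1)))
    with hε
  set sgn' : α → ℤ := Function.update sgn a (-(sgn a)) with hsgn'
  set pow : Finset (Finset α) := (a :: x).toFinset.powerset with hpow
  have expand : ∀ (w : List α) (sg : α → ℤ), w.toFinset.powerset = pow → ∀ k,
      gpair (v.rotate k) w sg
        = (∑ S ∈ pow.filter (fun S => a ∈ S), term (v.rotate k) w sg S)
          + (∑ S ∈ pow.filter (fun S => ¬a ∈ S), term (v.rotate k) w sg S) := by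
    intro w sg hw k
    rw [gpair_eq, hw, Finset.sum_filter_add_sum_filter_not]
  have hpow' : (x ++ [a]).toFinset.powerset = pow := by rw [hT]
  have expand1 := expand (a :: x) sgn rfl
  have expand2 := expand (x ++ [a]) sgn' hpow'
  calc
    ∑ k ∈ Finset.range (2 * n), ε k * gpair (v.rotate k) (a :: x) sgn
      = (∑ k ∈ Finset.range (2 * n),
            ε k * ∑ S ∈ pow.filter (fun S => a ∈ S), term (v.rotate k) (a :: x) sgn S)
        + (∑ k ∈ Finset.range (2 * n),
            ε k * ∑ S ∈ pow.filter (fun S => ¬a ∈ S), term (v.rotate k) (a :: x) sgn S) := by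
        rw [← Finset.sum_add_distrib]
        refine Finset.sum_congr rfl fun k _ => ?_
        rw [expand1 k, mul_add]
    _ = (∑ k ∈ Finset.range (2 * n),
            ε k * ∑ S ∈ pow.filter (fun S => a ∈ S), term (v.rotate k) (x ++ [a]) sgn' S)
        + (∑ k ∈ Finset.range (2 * n),
            ε k * ∑ S ∈ pow.filter (fun S => ¬a ∈ S), term (v.rotate k) (x ++ [a]) sgn' S) := by
        congr 1
        · -- the `a ∈ S` part: shift
          have step : ∀ k ∈ Finset.range (2 * n),
              ε k * ∑ S ∈ pow.filter (fun S => a ∈ S), term (v.rotate k) (a :: x) sgn S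
                = ε ((k + 1) % (2 * n)) *
                    ∑ S ∈ pow.filter (fun S => a ∈ S),
                      term (v.rotate ((k + 1) % (2 * n))) (x ++ [a]) sgn' S := by
            intro k hk
            rw [Finset.mul_sum, Finset.mul_sum]
            refine Finset.sum_congr rfl fun S hS => ?_
            have haS : a ∈ S := (Finset.mem_filter.mp hS).2
            exact term_in_shift n v hvlen hvGauss hdim hdimconst a x sgn hGauss k
              (Finset.mem_range.mp hk) S haS
          rw [Finset.sum_congr rfl step]
          exact sum_shift_mod (2 * n) (fun j =>
            ε j * ∑ S ∈ pow.filter (fun S => a ∈ S), term (v.rotate j) (x ++ [a]) sgn' S)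
        · -- the `a ∉ S` part: termwise equal
          refine Finset.sum_congr rfl fun k _ => ?_
          congr 1
          refine Finset.sum_congr rfl fun S hS => ?_
          exact term_out (v.rotate k) a x sgn S (Finset.mem_filter.mp hS).2
    _ = ∑ k ∈ Finset.range (2 * n), ε k * gpair (v.rotate k) (x ++ [a]) sgn' := by
        rw [← Finset.sum_add_distrib]
        refine Finset.sum_congr rfl fun k _ => ?_
        rw [expand2 k, mul_add]
end
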